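/- Let θ = (5 − √17)/4 and define the sequence (η_k)_{k≥0} by η₀ = (2−θ)(θ² − 3θ + 1)/(2(θ−1)²), η₁ = 0, η₂ = 3θ/2, and η_k = k·θ^{k−1}/2 for k ≥ 3. Then η_k ≥ 0 for all k, η₀ > 0, Σ_{k≥0} η_k = 1, and Σ_{k≥1} k·η_k = 1 (i.e., η is a critical probability distribution on ℕ). -/

import Mathlib

/-!
The offspring distribution `η` of the Galton–Watson tree underlying uniform galled
trees is a critical probability distribution on ℕ with `η₀ > 0`.
-/

namespace GalledB2

noncomputable def θ : ℝ := (5 - Real.sqrt 17) / 4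

/-- The offspring distribution: `η₀ = (2−θ)(θ²−3θ+1)/(2(θ−1)²)`, `η₁ = 0`,
`η₂ = 3θ/2`, and `η_k = k θ^{k−1}/2` for `k ≥ 3`. -/
noncomputable def η : ℕ → ℝ
  | 0 => (2 - θ) * (θ ^ 2 - 3 * θ + 1) / (2 * (θ - 1) ^ 2)
  | 1 => 0
  | 2 => 3 * θ / 2
  | (k + 3) => ((k + 3 : ℕ) : ℝ) * θ ^ (k + 2) / 2

lemma θ_pos : 0 < θ := by
  have := Real.sq_sqrt (by norm_num : (0:ℝ) ≤ 17)
  have := Real.sqrt_nonneg 17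
  unfold θ; nlinarith

lemma θ_lt : θ < 1/4 := by
  have := Real.sq_sqrt (by norm_num : (0:ℝ) ≤ 17)
  have := Real.sqrt_nonneg 17
  unfold θ; nlinarith

lemma hθ : 2*θ^2 - 5*θ + 1 = 0 := by
  have h := Real.sq_sqrt (by norm_num : (0:ℝ) ≤ 17)
  unfold θ; nlinarith

lemma hd : (1:ℝ) - θ ≠ 0 := by have := θ_lt; intro h; linarith

/-- **Theorem.** `η` is a critical probability distribution on ℕ with `η₀ > 0`:
all `η_k` are nonnegative, `η₀ > 0`, `Σ_k η_k = 1`, and `Σ_k k η_k = 1`. -/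
theorem eta_critical_probability :
    (∀ k, 0 ≤ η k) ∧ 0 < η 0 ∧ HasSum η 1 ∧ HasSum (fun k : ℕ => (k : ℝ) * η k) 1 := by
  have hpos := θ_pos
  have hlt := θ_lt
  have hd := hd
  have hq := hθ
  have hnorm : ‖θ‖ < 1 := by rw [Real.norm_eq_abs, abs_of_pos hpos]; linarith
  have A : HasSum (fun n : ℕ => θ ^ n) (1 - θ)⁻¹ :=
    hasSum_geometric_of_lt_one hpos.le (by linarith)
  have B : HasSum (fun n : ℕ => (n : ℝ) * θ ^ n) (θ / (1 - θ) ^ 2) :=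
    hasSum_coe_mul_geometric_of_norm_lt_one hnorm
  have C : HasSum (fun n : ℕ => (((n + 2).choose 2 : ℕ) : ℝ) * θ ^ n) (1 / (1 - θ) ^ 3) :=
    hasSum_choose_mul_geometric_of_norm_lt_one 2 hnorm
  have h0 : 0 < η 0 := by
    show 0 < (2 - θ) * (θ ^ 2 - 3 * θ + 1) / (2 * (θ - 1) ^ 2)
    apply div_pos (by nlinarith) (by nlinarith)
  refine ⟨?_, h0, ?_, ?_⟩
  · intro k
    match k with
    | 0 => exact h0.le
    | 1 => exact le_refl _
    | 2 => show (0:ℝ) ≤ 3 * θ / 2; positivity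
    | (k+3) =>
      show (0:ℝ) ≤ ((k + 3 : ℕ) : ℝ) * θ ^ (k + 2) / 2
      positivity
  · -- total mass
    have tail : HasSum (fun n : ℕ => η (n + 3))
        (θ^2/2 * (θ / (1 - θ) ^ 2) + 3*θ^2/2 * (1 - θ)⁻¹) := by
      have := (B.mul_left (θ^2/2)).add (A.mul_left (3*θ^2/2))
      convert this using 2 with n
      case e'_3 => rfl
      show ((n + 3 : ℕ) : ℝ) * θ ^ (n + 2) / 2 = _
      push_cast
      ring
    have := (hasSum_nat_add_iff (f := η) 3).mp tail
    convert this using 1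
    case e'_3 => rfl
    have e0 : η 0 = (2 - θ) * (θ ^ 2 - 3 * θ + 1) / (2 * (θ - 1) ^ 2) := rfl
    have e1 : η 1 = 0 := rfl
    have e2 : η 2 = 3 * θ / 2 := rfl
    rw [Finset.sum_range_succ, Finset.sum_range_succ, Finset.sum_range_one, e0, e1, e2]
    have hd2 : θ - 1 ≠ 0 := by intro h; exact hd (by linarith)
    field_simp
    ring
  · -- first moment
    set g : ℕ → ℝ := fun k => (k : ℝ) * η k with hg
    have tail : HasSum (fun n : ℕ => g (n + 3))
        (θ^2 * (1 / (1 - θ) ^ 3) + 3*θ^2/2 * (θ / (1 - θ) ^ 2) + 7*θ^2/2 * (1 - θ)⁻¹) := by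
      have := ((C.mul_left (θ^2)).add (B.mul_left (3*θ^2/2))).add (A.mul_left (7*θ^2/2))
      convert this using 2 with n
      case e'_3 => rfl
      show ((n + 3 : ℕ) : ℝ) * (((n + 3 : ℕ) : ℝ) * θ ^ (n + 2) / 2) = _
      have : (((n + 2).choose 2 : ℕ) : ℝ) = ((n:ℝ) + 2) * ((n:ℝ) + 1) / 2 := by
        rw [Nat.cast_choose_two]
        push_cast
        ring
      push_cast [this]
      ring
    have := (hasSum_nat_add_iff (f := g) 3).mp tail
    convert this using 1
    case e'_3 => rfl
    have e2 : g 2 = 2 * (3 * θ / 2) := rfl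
    have e1 : g 1 = 0 := by simp [hg]; rfl
    have e0 : g 0 = 0 := by simp [hg]
    rw [Finset.sum_range_succ, Finset.sum_range_succ, Finset.sum_range_one, e0, e1, e2]
    have hd2 : θ - 1 ≠ 0 := by intro h; exact hd (by linarith)
    field_simp
    linear_combination (θ^2 - 2*θ + 2) * hq


end GalledB2
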